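/- Evaluated recurrence system (the coefficient-wise form of the functional equation (3.16) combined with Lemma 3.3): for all integers n ≥ 1 and N ≥ 1, f_{n+1}(−q^{2N}) + f_{n−1}(−q^{2N}) = −(t₁ q^{−2N} + t₁^{−1} q^{2N}) f_n(−q^{2N}) + t̄₁ ∑_{p=1}^{N−1} {2p} f_n(−q^{2(2p−N)}) − t̄₂ ∑_{p=0}^{N−1} {2p+1} f_n(−q^{2(2p−N+1)}). -/

import Mathlib

set_option maxHeartbeats 8000000


/- STATEMENT 8: Evaluated recurrence system: for all integers n ≥ 1 and N ≥ 1,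
f_{n+1}(−q^{2N}) + f_{n−1}(−q^{2N}) = −(t₁ q^{−2N} + t₁^{−1} q^{2N}) f_n(−q^{2N})
 + t̄₁ ∑_{p=1}^{N−1} {2p} f_n(−q^{2(2p−N)}) − t̄₂ ∑_{p=0}^{N−1} {2p+1} f_n(−q^{2(2p−N+1)}),
where f_n = ∑_{p=1}^{n} a_{n,p}(U^p − U^{−p}) and f_n(c) is its evaluation at U = c. -/

noncomputable section

/-- The field `F = ℚ(q, t₁, t₂)` of rational functions in three indeterminates. -/
abbrev F : Type := FractionRing (MvPolynomial (Fin 3) ℚ)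

def q : F := algebraMap (MvPolynomial (Fin 3) ℚ) F (MvPolynomial.X 0)
def t1 : F := algebraMap (MvPolynomial (Fin 3) ℚ) F (MvPolynomial.X 1)
def t2 : F := algebraMap (MvPolynomial (Fin 3) ℚ) F (MvPolynomial.X 2)

lemma inj_F : Function.Injective (algebraMap (MvPolynomial (Fin 3) ℚ) F) :=
  IsFractionRing.injective _ _

lemma q_ne : q ≠ 0 := by
  rw [q, Ne, map_eq_zero_iff _ inj_F]
  exact MvPolynomial.X_ne_zero 0

lemma t1_ne : t1 ≠ 0 := by
  rw [t1, Ne, map_eq_zero_iff _ inj_F]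
  exact MvPolynomial.X_ne_zero 1

lemma t2_ne : t2 ≠ 0 := by
  rw [t2, Ne, map_eq_zero_iff _ inj_F]
  exact MvPolynomial.X_ne_zero 2

lemma q_pow_ne_one_nat (k : ℕ) (hk : k ≠ 0) : q ^ k ≠ 1 := by
  intro h
  rw [q, ← map_pow, show (1 : F) = algebraMap (MvPolynomial (Fin 3) ℚ) F 1 from (map_one _).symm] at h
  have h2 := inj_F h
  have h3 := congrArg (MvPolynomial.eval (fun _ => (2 : ℚ))) h2
  simp [MvPolynomial.eval_pow] at h3
  have : (1 : ℚ) < 2 ^ k := one_lt_pow₀ (by norm_num) hk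
  rw [h3] at this
  exact lt_irrefl _ this

lemma q_zpow_ne_one {m : ℤ} (hm : m ≠ 0) : q ^ m ≠ 1 := by
  rcases m.lt_or_lt_of_ne hm with h | h
  · intro hc
    have : q ^ (-m) = 1 := by
      rw [zpow_neg, hc, inv_one]
    obtain ⟨k, hk⟩ : ∃ k : ℕ, -m = (k : ℤ) := ⟨(-m).toNat, (Int.toNat_of_nonneg (by omega)).symm⟩
    rw [hk, zpow_natCast] at this
    exact q_pow_ne_one_nat k (by omega) this
  · intro hc
    obtain ⟨k, hk⟩ : ∃ k : ℕ, m = (k : ℤ) := ⟨m.toNat, (Int.toNat_of_nonneg (by omega)).symm⟩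
    rw [hk, zpow_natCast] at hc
    exact q_pow_ne_one_nat k (by omega) hc

lemma q_zpow_ne {a b : ℤ} (h : a ≠ b) : q ^ a ≠ q ^ b := by
  intro hc
  apply q_zpow_ne_one (sub_ne_zero.mpr h)
  rw [zpow_sub₀ q_ne, hc, div_self (zpow_ne_zero _ q_ne)]

lemma q_zpow_sub_ne {a b : ℤ} (h : a ≠ b) : q ^ a - q ^ b ≠ 0 :=
  sub_ne_zero.mpr (q_zpow_ne h)

lemma gen0 {K : Type*} [Field K] (x u v w T1 T2 : K)
    (hv : v ≠ 0) (hw : w ≠ 0) (hT1 : T1 ≠ 0) (hT2 : T2 ≠ 0)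
    (h1 : u * u * x * x - 1 ≠ 0) (h2 : u * u - x * x ≠ 0) :
    (u*u*x*x*T2 - T1*T1*T2 + u*x*T1*(T2*T2-1)) / (T1*T2) / (u*u*x*x-1) * (-1) * ((w*w*v*v-1)/(w*v))
      + ((u*u*T2 - x*x*T1*T1*T2 + u*x*T1*(T2*T2-1)) / (T1*T2) / (u*u-x*x)
          - (u*u*x*x*T2 - T1*T1*T2 + u*x*T1*(T2*T2-1)) / (T1*T2) / (u*u*x*x-1)) * ((w*w-1)/w)
      + (-((x*x*T2 - u*u*T1*T1*T2 + u*x*T1*(T2*T2-1)) / (T1*T2) / (u*u-x*x))) * (-1) * ((w*w-v*v)/(w*v))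
    = -((T1*T1 + v*v)/(T1*v)) * ((w*w-1)/w)
      + (T1 - T1⁻¹) *
        ((w*w*v - u*u*x*x)/w/(u*u*x*x-1) + (u*u*v - x*x*w*w)/w/(u*u-x*x)
          - (x*x*w*w - u*u*v)/(w*v)/(u*u-x*x) - (u*u*x*x - w*w*v)/(w*v)/(u*u*x*x-1))
      - (T2 - T2⁻¹) *
        (u*x*(w*w*v-1)/w/(u*u*x*x-1) + u*x*(v-w*w)/w/(u*u-x*x)
          - u*x*(w*w-v)/(w*v)/(u*u-x*x) - u*x*(1-w*w*v)/(w*v)/(u*u*x*x-1)) := by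
  have h5 : (u*u*x*x-1) * (u*u*x*x-1)⁻¹ = 1 := mul_inv_cancel₀ h1
  have h6 : (u*u-x*x) * (u*u-x*x)⁻¹ = 1 := mul_inv_cancel₀ h2
  have hT1c : T1 * T1⁻¹ = 1 := mul_inv_cancel₀ hT1
  have hT2c : T2 * T2⁻¹ = 1 := mul_inv_cancel₀ hT2
  have hvc : v * v⁻¹ = 1 := mul_inv_cancel₀ hv
  have hwc : w * w⁻¹ = 1 := mul_inv_cancel₀ hw
  linear_combination ((-1)*v^2*w^2*T2*T1⁻¹*T2⁻¹*v⁻¹*w⁻¹ + T2*T1⁻¹*T2⁻¹*v⁻¹*w⁻¹ + (-1)*w^2*T2*T1⁻¹*T2⁻¹*w⁻¹ + T2*T1⁻¹*T2⁻¹*w⁻¹ + (-1)*T1⁻¹*v⁻¹*w⁻¹ + (-1)*T1⁻¹*w⁻¹ + T1*v⁻¹*w⁻¹ + T1*w⁻¹) * h5 + (v^2*T1^2*T2*T1⁻¹*T2⁻¹*v⁻¹*w⁻¹ + (-1)*w^2*T1^2*T2*T1⁻¹*T2⁻¹*v⁻¹*w⁻¹ + w^2*T2*T1⁻¹*T2⁻¹*w⁻¹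 + (-1)*T2*T1⁻¹*T2⁻¹*w⁻¹ + v*T1⁻¹*v⁻¹*w⁻¹ + v*T1⁻¹*w⁻¹ + (-1)*v*T1*v⁻¹*w⁻¹ + (-1)*v*T1*w⁻¹) * h6 + ((-1)*x*u*v^2*w^2*T2^2*T2⁻¹*v⁻¹*w⁻¹*(u*u*x*x-1)⁻¹ + x*u*T2^2*T2⁻¹*v⁻¹*w⁻¹*(u*u*x*x-1)⁻¹ + x*u*v^2*w^2*T2⁻¹*v⁻¹*w⁻¹*(u*u*x*x-1)⁻¹ + (-1)*x*u*T2⁻¹*v⁻¹*w⁻¹*(u*u*x*x-1)⁻¹ + v^2*w^2*T1*T2*T2⁻¹*v⁻¹*w⁻¹*(u*u*x*x-1)⁻¹ + (-1)*T1*T2*T2⁻¹*v⁻¹*w⁻¹*(u*u*x*x-1)⁻¹ + (-1)*x*u*w^2*T2^2*T2⁻¹*w⁻¹*(u*u*x*x-1)⁻¹ + x*u*T2^2*T2⁻¹*w⁻¹*(u*u*x*x-1)⁻¹ + x*u*w^2*T2⁻¹*w⁻¹*(u*u*x*x-1)⁻¹ + (-1)*x*u*T2⁻¹*w⁻¹*(u*u*x*x-1)⁻¹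 + w^2*T1*T2*T2⁻¹*w⁻¹*(u*u*x*x-1)⁻¹ + (-1)*T1*T2*T2⁻¹*w⁻¹*(u*u*x*x-1)⁻¹ + (-1)*x*u*v^2*T2^2*T2⁻¹*v⁻¹*w⁻¹*(u*u-x*x)⁻¹ + x*u*w^2*T2^2*T2⁻¹*v⁻¹*w⁻¹*(u*u-x*x)⁻¹ + x*u*v^2*T2⁻¹*v⁻¹*w⁻¹*(u*u-x*x)⁻¹ + (-1)*x*u*w^2*T2⁻¹*v⁻¹*w⁻¹*(u*u-x*x)⁻¹ + x^2*v^2*T1*T2*T2⁻¹*v⁻¹*w⁻¹*(u*u-x*x)⁻¹ + (-1)*x^2*w^2*T1*T2*T2⁻¹*v⁻¹*w⁻¹*(u*u-x*x)⁻¹ + x*u*w^2*T2^2*T2⁻¹*w⁻¹*(u*u-x*x)⁻¹ + (-1)*x*u*T2^2*T2⁻¹*w⁻¹*(u*u-x*x)⁻¹ + (-1)*x*u*w^2*T2⁻¹*w⁻¹*(u*u-x*x)⁻¹ + x*u*T2⁻¹*w⁻¹*(u*u-x*x)⁻¹ + (-1)*x^2*w^2*T1*T2*T2⁻¹*w⁻¹*(u*u-x*x)⁻¹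 + x^2*T1*T2*T2⁻¹*w⁻¹*(u*u-x*x)⁻¹ + v^2*T1*T2*T2⁻¹*v⁻¹*w⁻¹ + (-1)*w^2*T1*T2*T2⁻¹*v⁻¹*w⁻¹ + w^2*T1*v⁻¹*w⁻¹ + (-1)*T1*v⁻¹*w⁻¹) * hT1c + ((-1)*v^2*w^2*T1⁻¹*v⁻¹*w⁻¹*(u*u*x*x-1)⁻¹ + T1⁻¹*v⁻¹*w⁻¹*(u*u*x*x-1)⁻¹ + (-1)*w^2*T1⁻¹*w⁻¹*(u*u*x*x-1)⁻¹ + T1⁻¹*w⁻¹*(u*u*x*x-1)⁻¹ + (-1)*x*u*v^2*w^2*T2*v⁻¹*w⁻¹*(u*u*x*x-1)⁻¹ + x*u*T2*v⁻¹*w⁻¹*(u*u*x*x-1)⁻¹ + v^2*w^2*T1*v⁻¹*w⁻¹*(u*u*x*x-1)⁻¹ + (-1)*T1*v⁻¹*w⁻¹*(u*u*x*x-1)⁻¹ + (-1)*x*u*w^2*T2*w⁻¹*(u*u*x*x-1)⁻¹ + x*u*T2*w⁻¹*(u*u*x*x-1)⁻¹ + w^2*T1*w⁻¹*(u*u*x*x-1)⁻¹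 + (-1)*T1*w⁻¹*(u*u*x*x-1)⁻¹ + (-1)*x^2*v^2*T1⁻¹*v⁻¹*w⁻¹*(u*u-x*x)⁻¹ + x^2*w^2*T1⁻¹*v⁻¹*w⁻¹*(u*u-x*x)⁻¹ + x^2*w^2*T1⁻¹*w⁻¹*(u*u-x*x)⁻¹ + (-1)*x^2*T1⁻¹*w⁻¹*(u*u-x*x)⁻¹ + (-1)*x*u*v^2*T2*v⁻¹*w⁻¹*(u*u-x*x)⁻¹ + x*u*w^2*T2*v⁻¹*w⁻¹*(u*u-x*x)⁻¹ + x^2*v^2*T1*v⁻¹*w⁻¹*(u*u-x*x)⁻¹ + (-1)*x^2*w^2*T1*v⁻¹*w⁻¹*(u*u-x*x)⁻¹ + x*u*w^2*T2*w⁻¹*(u*u-x*x)⁻¹ + (-1)*x*u*T2*w⁻¹*(u*u-x*x)⁻¹ + (-1)*x^2*w^2*T1*w⁻¹*(u*u-x*x)⁻¹ + x^2*T1*w⁻¹*(u*u-x*x)⁻¹ + (-1)*v^2*w^2*T1⁻¹*v⁻¹*w⁻¹ + T1⁻¹*v⁻¹*w⁻¹ + v^2*T1*v⁻¹*w⁻¹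 + (-1)*w^2*T1*v⁻¹*w⁻¹) * hT2c + ((-1)*v*w^2*T1⁻¹*w⁻¹*(u*u*x*x-1)⁻¹ + w^2*T1⁻¹*w⁻¹*(u*u*x*x-1)⁻¹ + x*u*v*w^2*T2⁻¹*w⁻¹*(u*u*x*x-1)⁻¹ + (-1)*x*u*w^2*T2⁻¹*w⁻¹*(u*u*x*x-1)⁻¹ + (-1)*x*u*v*w^2*T2*w⁻¹*(u*u*x*x-1)⁻¹ + x*u*w^2*T2*w⁻¹*(u*u*x*x-1)⁻¹ + v*w^2*T1*w⁻¹*(u*u*x*x-1)⁻¹ + (-1)*w^2*T1*w⁻¹*(u*u*x*x-1)⁻¹ + (-1)*x^2*v*T1⁻¹*w⁻¹*(u*u-x*x)⁻¹ + x^2*T1⁻¹*w⁻¹*(u*u-x*x)⁻¹ + x*u*v*T2⁻¹*w⁻¹*(u*u-x*x)⁻¹ + (-1)*x*u*T2⁻¹*w⁻¹*(u*u-x*x)⁻¹ + (-1)*x*u*v*T2*w⁻¹*(u*u-x*x)⁻¹ + x*u*T2*w⁻¹*(u*u-x*x)⁻¹ + x^2*v*T1*w⁻¹*(u*u-x*x)⁻¹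 + (-1)*x^2*T1*w⁻¹*(u*u-x*x)⁻¹ + (-1)*v*T1⁻¹*w⁻¹ + T1⁻¹*w⁻¹ + v*T1*w⁻¹ + (-1)*T1*w⁻¹) * hvc

/-- `{m} = q^m − q^{−m}`. -/
def br (m : ℤ) : F := q ^ m - q ^ (-m)

/-- `A_p = (q^{2p−1}t₁^{−1} − q^{1−2p}t₁ + t₂ − t₂^{−1})/(q^{2p−1} − q^{1−2p})`. -/
def A (p : ℤ) : F :=
  (q ^ (2 * p - 1) * t1⁻¹ - q ^ (1 - 2 * p) * t1 + t2 - t2⁻¹) /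
    (q ^ (2 * p - 1) - q ^ (1 - 2 * p))

lemma A_add_A (p : ℤ) : A p + A (1 - p) = t1 + t1⁻¹ := by
  rw [A, A, show 2 * (1 - p) - 1 = 1 - 2 * p from by ring,
    show 1 - 2 * (1 - p) = 2 * p - 1 from by ring]
  have hd : q ^ (2 * p - 1) - q ^ (1 - 2 * p) ≠ 0 := q_zpow_sub_ne (by omega)
  have hd' : q ^ (1 - 2 * p) - q ^ (2 * p - 1) ≠ 0 := q_zpow_sub_ne (by omega)
  field_simp
  ring

lemma A_diff (p : ℤ) : A (-p) - A (-(p - 1)) = A p - A (p + 1) := by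
  have h1 := A_add_A (p + 1)
  have h2 := A_add_A p
  rw [show 1 - (p + 1) = -p from by ring] at h1
  rw [show (1 : ℤ) - p = -(p - 1) from by ring] at h2
  linear_combination h1 - h2

-- helpers
lemma hGm (m k : ℤ) : (-(q ^ m)) ^ k = (-1 : F) ^ k * q ^ (m * k) := by
  rw [show -(q ^ m) = (-1) * q ^ m from by ring, mul_zpow, ← zpow_mul]

lemma negone_zpow_neg (k : ℤ) : (-1 : F) ^ (-k) = (-1 : F) ^ k := by
  rw [zpow_neg]
  refine inv_eq_of_mul_eq_one_right ?_
  rw [← mul_zpow]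
  norm_num

lemma hGm2 (m k : ℤ) : (-(q ^ m)) ^ k - (-(q ^ m)) ^ (-k)
    = (-1 : F) ^ k * (q ^ (m * k) - q ^ (-(m * k))) := by
  rw [hGm, hGm, negone_zpow_neg, show m * -k = -(m * k) from by ring]
  ring

lemma br_mul (c : F) (α β : ℤ) :
    (q ^ α - q ^ (-α)) * (c * (q ^ β - q ^ (-β)))
      = c * (q ^ (α + β) + q ^ (-α - β) - q ^ (α - β) - q ^ (-α + β)) := by
  rw [zpow_add₀ q_ne α β, show -α - β = -α + -β from by ring, zpow_add₀ q_ne,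
    show α - β = α + -β from by ring, zpow_add₀ q_ne, zpow_add₀ q_ne (-α) β]
  ring

lemma geom (α β : ℤ) (h : q ^ α ≠ 1) (M : ℕ) :
    ∑ j ∈ Finset.range M, q ^ (α * (j : ℤ) + β)
      = (q ^ (α * (M : ℤ) + β) - q ^ β) / (q ^ α - 1) := by
  have h1 : ∀ j : ℕ, q ^ (α * (j : ℤ) + β) = (q ^ α) ^ j * q ^ β := by
    intro j
    rw [zpow_add₀ q_ne, zpow_mul, zpow_natCast]
  rw [Finset.sum_congr rfl (fun j _ => h1 j), ← Finset.sum_mul, geom_sum_eq h M,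
    div_mul_eq_mul_div, sub_mul, one_mul, ← zpow_natCast (q ^ α) M, ← zpow_mul,
    ← zpow_add₀ q_ne]

lemma geom2 (α β : ℤ) (h : q ^ (-α) ≠ 1) (M : ℕ) :
    ∑ j ∈ Finset.range M, q ^ (α * (j : ℤ) + β)
      = (q ^ (β - α) - q ^ (α * (M : ℤ) + β - α)) / (q ^ (-α) - 1) := by
  have hα : q ^ α ≠ 1 := by
    intro hc
    apply h
    rw [zpow_neg, hc, inv_one]
  have hd1 : q ^ α - 1 ≠ 0 := sub_ne_zero.mpr hα
  have hd2 : q ^ (-α) - 1 ≠ 0 := sub_ne_zero.mpr h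
  rw [geom α β hα M, div_eq_div_iff hd1 hd2]
  have hcd : q ^ (-α) * q ^ α = 1 := by
    rw [← zpow_add₀ q_ne]
    norm_num
  rw [show β - α = β + -α from by ring,
    show α * (M : ℤ) + β - α = α * (M : ℤ) + β + -α from by ring]
  simp only [zpow_add₀ q_ne]
  linear_combination (q ^ (α * (M : ℤ)) * q ^ β - q ^ β) * hcd

-- A lemmas
lemma A_p1 (p : ℤ) : A (p + 1)
    = (q ^ (2 * p) * q * t1⁻¹ - (q ^ (2 * p) * q)⁻¹ * t1 + t2 - t2⁻¹)
      * (q ^ (2 * p) * q - (q ^ (2 * p) * q)⁻¹)⁻¹ := by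
  rw [A, show 2 * (p + 1) - 1 = 2 * p + 1 from by ring,
    show 1 - 2 * (p + 1) = -(2 * p + 1) from by ring, zpow_neg, zpow_add_one₀ q_ne,
    div_eq_mul_inv]

lemma A_p (p : ℤ) : A p
    = (q ^ (2 * p) * q⁻¹ * t1⁻¹ - (q ^ (2 * p) * q⁻¹)⁻¹ * t1 + t2 - t2⁻¹)
      * (q ^ (2 * p) * q⁻¹ - (q ^ (2 * p) * q⁻¹)⁻¹)⁻¹ := by
  rw [A, show 1 - 2 * p = -(2 * p - 1) from by ring, zpow_neg, zpow_sub_one₀ q_ne,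
    div_eq_mul_inv]

lemma A_1mp (p : ℤ) : A (1 - p)
    = ((q ^ (2 * p) * q⁻¹)⁻¹ * t1⁻¹ - q ^ (2 * p) * q⁻¹ * t1 + t2 - t2⁻¹)
      * ((q ^ (2 * p) * q⁻¹)⁻¹ - q ^ (2 * p) * q⁻¹)⁻¹ := by
  rw [A, show 2 * (1 - p) - 1 = -(2 * p - 1) from by ring,
    show 1 - 2 * (1 - p) = 2 * p - 1 from by ring, zpow_neg, zpow_sub_one₀ q_ne,
    div_eq_mul_inv]

-- c-power lemmas
lemma cpow0 (p : ℤ) (N : ℕ) :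
    (-(q ^ (2 * (N : ℤ)))) ^ p - (-(q ^ (2 * (N : ℤ)))) ^ (-p)
      = (-1 : F) ^ p * (q ^ (2 * (N : ℤ) * p) - (q ^ (2 * (N : ℤ) * p))⁻¹) := by
  rw [hGm2, zpow_neg]

lemma cpow1 (p : ℤ) (N : ℕ) :
    (-(q ^ (2 * (N : ℤ)))) ^ (p + 1) - (-(q ^ (2 * (N : ℤ)))) ^ (-(p + 1))
      = (-1 : F) ^ p * (-1) *
        (q ^ (2 * (N : ℤ) * p) * q ^ (2 * (N : ℤ))
          - (q ^ (2 * (N : ℤ) * p))⁻¹ * (q ^ (2 * (N : ℤ)))⁻¹) := by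
  rw [hGm2, zpow_neg, show 2 * (N : ℤ) * (p + 1) = 2 * (N : ℤ) * p + 2 * (N : ℤ) from by ring,
    zpow_add₀ q_ne, zpow_add_one₀ (show (-1 : F) ≠ 0 from by norm_num)]
  ring

lemma cpow2 (p : ℤ) (N : ℕ) :
    (-(q ^ (2 * (N : ℤ)))) ^ (p - 1) - (-(q ^ (2 * (N : ℤ)))) ^ (-(p - 1))
      = (-1 : F) ^ p * (-1) *
        (q ^ (2 * (N : ℤ) * p) * (q ^ (2 * (N : ℤ)))⁻¹
          - q ^ (2 * (N : ℤ)) * (q ^ (2 * (N : ℤ) * p))⁻¹) := by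
  rw [hGm2, zpow_neg, show 2 * (N : ℤ) * (p - 1) = 2 * (N : ℤ) * p - 2 * (N : ℤ) from by ring,
    zpow_sub₀ q_ne, inv_div, zpow_sub_one₀ (show (-1 : F) ≠ 0 from by norm_num), inv_neg_one]
  ring

-- nonvanishing of denominators
lemma DD1_ne (p : ℤ) : q^(2*p)*(q^(2*p)*(q*q)) - 1 ≠ 0 := by
  have e : q^(2*p)*(q^(2*p)*(q*q)) = q^(4*p+2) := by
    rw [show (4*p+2:ℤ) = 2*p+(2*p+(1+1)) from by ring, zpow_add₀ q_ne, zpow_add₀ q_ne,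
      zpow_add₀ q_ne, zpow_one]
  rw [e]
  exact sub_ne_zero.mpr (q_zpow_ne_one (by omega))

lemma DD2_ne (p : ℤ) : q^(2*p)*q^(2*p) - q*q ≠ 0 := by
  have e1 : q^(2*p)*q^(2*p) = q^(4*p) := by
    rw [show (4*p:ℤ) = 2*p+2*p from by ring, zpow_add₀ q_ne]
  have e2 : q*q = q^(2:ℤ) := by
    rw [show (2:ℤ) = 1+1 from rfl, zpow_add₀ q_ne, zpow_one]
  rw [e1, e2]
  exact q_zpow_sub_ne (by omega)

lemma DE2_ne (p : ℤ) : q^(2*p)*(q^(2*p)*(q⁻¹*q⁻¹)) - 1 ≠ 0 := by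
  have e : q^(2*p)*(q^(2*p)*(q⁻¹*q⁻¹)) = q^(4*p-2) := by
    rw [show (4*p-2:ℤ) = 2*p+(2*p+(-1+ -1)) from by ring, zpow_add₀ q_ne, zpow_add₀ q_ne,
      zpow_add₀ q_ne, zpow_neg, zpow_one]
  rw [e]
  exact sub_ne_zero.mpr (q_zpow_ne_one (by omega))

lemma hjAsub (p : ℤ) :
    (q^(2*p)*q - (q^(2*p)*q)⁻¹)⁻¹ = q^(2*p)*q*(q^(2*p)*(q^(2*p)*(q*q)) - 1)⁻¹ := by
  refine inv_eq_of_mul_eq_one_right ?_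
  have hxc : q * q⁻¹ = 1 := mul_inv_cancel₀ q_ne
  have huc : q^(2*p) * (q^(2*p))⁻¹ = 1 := mul_inv_cancel₀ (zpow_ne_zero _ q_ne)
  have hD1c : (q^(2*p)*(q^(2*p)*(q*q)) - 1) * (q^(2*p)*(q^(2*p)*(q*q)) - 1)⁻¹ = 1 :=
    mul_inv_cancel₀ (DD1_ne p)
  linear_combination ((-1:F)*q^(2*p)*(q^(2*p))⁻¹*(q^(2*p)*(q^(2*p)*(q*q)) - 1)⁻¹) * hxc + ((-1:F)*(q^(2*p)*(q^(2*p)*(q*q)) - 1)⁻¹) * huc + ((1:F)) * hD1c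

lemma hjBsub (p : ℤ) :
    (q^(2*p)*q⁻¹ - (q^(2*p)*q⁻¹)⁻¹)⁻¹ = q^(2*p)*q*(q^(2*p)*q^(2*p) - q*q)⁻¹ := by
  refine inv_eq_of_mul_eq_one_right ?_
  have hxc : q * q⁻¹ = 1 := mul_inv_cancel₀ q_ne
  have huc : q^(2*p) * (q^(2*p))⁻¹ = 1 := mul_inv_cancel₀ (zpow_ne_zero _ q_ne)
  have hD2c : (q^(2*p)*q^(2*p) - q*q) * (q^(2*p)*q^(2*p) - q*q)⁻¹ = 1 :=
    mul_inv_cancel₀ (DD2_ne p)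
  have hinv : (q^(2*p)*q⁻¹)⁻¹ = (q^(2*p))⁻¹ * q := by
    rw [mul_inv, inv_inv]
  rw [hinv]
  linear_combination ((q^(2*p))^2*(q^(2*p)*q^(2*p) - q*q)⁻¹) * hxc + ((-1:F)*(q)^2*(q^(2*p)*q^(2*p) - q*q)⁻¹) * huc + ((1:F)) * hD2c

lemma hjCsub (p : ℤ) :
    ((q^(2*p)*q⁻¹)⁻¹ - q^(2*p)*q⁻¹)⁻¹ = -(q^(2*p)*q*(q^(2*p)*q^(2*p) - q*q)⁻¹) := by
  refine inv_eq_of_mul_eq_one_right ?_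
  have hxc : q * q⁻¹ = 1 := mul_inv_cancel₀ q_ne
  have huc : q^(2*p) * (q^(2*p))⁻¹ = 1 := mul_inv_cancel₀ (zpow_ne_zero _ q_ne)
  have hD2c : (q^(2*p)*q^(2*p) - q*q) * (q^(2*p)*q^(2*p) - q*q)⁻¹ = 1 :=
    mul_inv_cancel₀ (DD2_ne p)
  have hinv : (q^(2*p)*q⁻¹)⁻¹ = (q^(2*p))⁻¹ * q := by
    rw [mul_inv, inv_inv]
  rw [hinv]
  linear_combination ((q^(2*p))^2*(q^(2*p)*q^(2*p) - q*q)⁻¹) * hxc + ((-1:F)*(q)^2*(q^(2*p)*q^(2*p) - q*q)⁻¹) * huc + ((1:F)) * hD2c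

lemma hE2sub (p : ℤ) :
    (q^(2*p)*(q^(2*p)*(q⁻¹*q⁻¹)) - 1)⁻¹ = q*q*(q^(2*p)*q^(2*p) - q*q)⁻¹ := by
  refine inv_eq_of_mul_eq_one_right ?_
  have hxc : q * q⁻¹ = 1 := mul_inv_cancel₀ q_ne
  have hD2c : (q^(2*p)*q^(2*p) - q*q) * (q^(2*p)*q^(2*p) - q*q)⁻¹ = 1 :=
    mul_inv_cancel₀ (DD2_ne p)
  linear_combination (q*(q^(2*p))^2*q⁻¹*(q^(2*p)*q^(2*p) - q*q)⁻¹ + (q^(2*p))^2*(q^(2*p)*q^(2*p) - q*q)⁻¹) * hxc + ((1:F)) * hD2c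

lemma S1_closed (p : ℤ) (N : ℕ) (hN : 1 ≤ N) :
    ∑ j ∈ Finset.Icc 1 (N - 1), br (2 * (j : ℤ)) *
        ((-(q ^ (2 * (2 * (j : ℤ) - (N : ℤ))))) ^ p
          - (-(q ^ (2 * (2 * (j : ℤ) - (N : ℤ))))) ^ (-p))
      = (-1 : F) ^ p * (
        (q^(2*(N:ℤ)*p) * q^(2*(N:ℤ)) - (q^(2*(N:ℤ)*p))⁻¹) * (q^(2*p)*(q^(2*p)*(q*q)) - 1)⁻¹
        + (q^(2*(N:ℤ)*p) * (q^(2*p)*(q^(2*p)*(q*q)))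
            - q^(2*p)*(q^(2*p)*(q*q)) * ((q^(2*(N:ℤ)*p))⁻¹ * (q^(2*(N:ℤ)))⁻¹))
          * (q^(2*p)*(q^(2*p)*(q*q)) - 1)⁻¹
        - (q^(2*(N:ℤ)*p) * (q^(2*p)*(q^(2*p)*(q⁻¹*q⁻¹)))
            - q^(2*p)*(q^(2*p)*(q⁻¹*q⁻¹)) * (q^(2*(N:ℤ)) * (q^(2*(N:ℤ)*p))⁻¹))
          * (q^(2*p)*(q^(2*p)*(q⁻¹*q⁻¹)) - 1)⁻¹
        - (q^(2*(N:ℤ)*p) * (q^(2*(N:ℤ)))⁻¹ - (q^(2*(N:ℤ)*p))⁻¹)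
          * (q^(2*p)*(q^(2*p)*(q⁻¹*q⁻¹)) - 1)⁻¹) := by
  have hz1 : q ^ ((4:ℤ)*p+2) ≠ 1 := q_zpow_ne_one (by omega)
  have hz2 : q ^ ((4:ℤ)*p-2) ≠ 1 := q_zpow_ne_one (by omega)
  have e1 : ∀ j : ℕ, br (2 * (j : ℤ)) *
      ((-(q ^ (2 * (2 * (j : ℤ) - (N : ℤ))))) ^ p
        - (-(q ^ (2 * (2 * (j : ℤ) - (N : ℤ))))) ^ (-p))
      = (-1 : F) ^ p * (q ^ ((4*p+2)*(j:ℤ) + -(2*(N:ℤ)*p)) + q ^ ((-4*p-2)*(j:ℤ) + 2*(N:ℤ)*p)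
          - q ^ ((2-4*p)*(j:ℤ) + 2*(N:ℤ)*p) - q ^ ((4*p-2)*(j:ℤ) + -(2*(N:ℤ)*p))) := by
    intro j
    rw [br, hGm2, br_mul]
    rw [show 2*(j:ℤ) + 2*(2*(j:ℤ) - (N:ℤ))*p = (4*p+2)*(j:ℤ) + -(2*(N:ℤ)*p) from by ring,
      show -(2*(j:ℤ)) - 2*(2*(j:ℤ) - (N:ℤ))*p = (-4*p-2)*(j:ℤ) + 2*(N:ℤ)*p from by ring,
      show 2*(j:ℤ) - 2*(2*(j:ℤ) - (N:ℤ))*p = (2-4*p)*(j:ℤ) + 2*(N:ℤ)*p from by ring,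
      show -(2*(j:ℤ)) + 2*(2*(j:ℤ) - (N:ℤ))*p = (4*p-2)*(j:ℤ) + -(2*(N:ℤ)*p) from by ring]
  have hins : Finset.Icc 1 (N - 1) = (Finset.range N).erase 0 := by
    ext j
    simp only [Finset.mem_Icc, Finset.mem_range, Finset.mem_erase]
    omega
  rw [hins, Finset.sum_erase _ (by norm_num [br])]
  rw [Finset.sum_congr rfl (fun j _ => e1 j), ← Finset.mul_sum]
  congr 1
  simp only [Finset.sum_sub_distrib, Finset.sum_add_distrib]
  rw [geom (4*p+2) (-(2*(N:ℤ)*p)) hz1 N,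
    geom2 (-4*p-2) (2*(N:ℤ)*p) (q_zpow_ne_one (by omega)) N,
    geom2 (2-4*p) (2*(N:ℤ)*p) (q_zpow_ne_one (by omega)) N,
    geom (4*p-2) (-(2*(N:ℤ)*p)) hz2 N]
  rw [show (4*p+2)*(N:ℤ) + -(2*(N:ℤ)*p) = 2*(N:ℤ)*p + 2*(N:ℤ) from by ring,
    show 2*(N:ℤ)*p - (-4*p-2) = 2*(N:ℤ)*p + (2*p + (2*p + (1+1))) from by ring,
    show (-4*p-2)*(N:ℤ) + 2*(N:ℤ)*p - (-4*p-2) = 2*p + (2*p + (1+1)) + -(2*(N:ℤ)*p + 2*(N:ℤ)) from by ring,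
    show 2*(N:ℤ)*p - (2-4*p) = 2*(N:ℤ)*p + (2*p + (2*p + (-1 + -1))) from by ring,
    show (2-4*p)*(N:ℤ) + 2*(N:ℤ)*p - (2-4*p) = 2*p + (2*p + (-1 + -1)) + (2*(N:ℤ) + -(2*(N:ℤ)*p)) from by ring,
    show (4*p-2)*(N:ℤ) + -(2*(N:ℤ)*p) = 2*(N:ℤ)*p + -(2*(N:ℤ)) from by ring,
    show -(-4*p-2) = 2*p + (2*p + (1+1)) from by ring,
    show (4*p+2:ℤ) = 2*p + (2*p + (1+1)) from by ring,
    show -(2-4*p) = 2*p + (2*p + (-1 + -1)) from by ring,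
    show (4*p-2:ℤ) = 2*p + (2*p + (-1 + -1)) from by ring]
  simp only [zpow_add₀ q_ne, zpow_neg, zpow_one]
  ring

lemma S2_closed (p : ℤ) (N : ℕ) (hN : 1 ≤ N) :
    ∑ j ∈ Finset.range N, br (2 * (j : ℤ) + 1) *
        ((-(q ^ (2 * (2 * (j : ℤ) - (N : ℤ) + 1)))) ^ p
          - (-(q ^ (2 * (2 * (j : ℤ) - (N : ℤ) + 1)))) ^ (-p))
      = (-1 : F) ^ p * (
        (q^(2*(N:ℤ)*p) * q^(2*(N:ℤ)) * q^(2*p) * q - q^(2*p) * q * (q^(2*(N:ℤ)*p))⁻¹)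
          * (q^(2*p)*(q^(2*p)*(q*q)) - 1)⁻¹
        - (q^(2*(N:ℤ)*p) * q^(2*p) * q⁻¹ - q^(2*(N:ℤ)) * (q^(2*(N:ℤ)*p))⁻¹ * q^(2*p) * q⁻¹)
          * (q^(2*p)*(q^(2*p)*(q⁻¹*q⁻¹)) - 1)⁻¹
        - (q^(2*(N:ℤ)*p) * (q^(2*(N:ℤ)))⁻¹ * q^(2*p) * q⁻¹ - q^(2*p) * q⁻¹ * (q^(2*(N:ℤ)*p))⁻¹)
          * (q^(2*p)*(q^(2*p)*(q⁻¹*q⁻¹)) - 1)⁻¹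
        + (q^(2*(N:ℤ)*p) * q^(2*p) * q - q^(2*p) * q * ((q^(2*(N:ℤ)*p))⁻¹ * (q^(2*(N:ℤ)))⁻¹))
          * (q^(2*p)*(q^(2*p)*(q*q)) - 1)⁻¹) := by
  have hz1 : q ^ ((4:ℤ)*p+2) ≠ 1 := q_zpow_ne_one (by omega)
  have hz2 : q ^ ((4:ℤ)*p-2) ≠ 1 := q_zpow_ne_one (by omega)
  have e2 : ∀ j : ℕ, br (2 * (j : ℤ) + 1) *
      ((-(q ^ (2 * (2 * (j : ℤ) - (N : ℤ) + 1)))) ^ p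
        - (-(q ^ (2 * (2 * (j : ℤ) - (N : ℤ) + 1)))) ^ (-p))
      = (-1 : F) ^ p * (q ^ ((4*p+2)*(j:ℤ) + (2*p + 1 - 2*(N:ℤ)*p))
          + q ^ ((-4*p-2)*(j:ℤ) + (2*(N:ℤ)*p - 2*p - 1))
          - q ^ ((2-4*p)*(j:ℤ) + (1 - 2*p + 2*(N:ℤ)*p))
          - q ^ ((4*p-2)*(j:ℤ) + (2*p - 1 - 2*(N:ℤ)*p))) := by
    intro j
    rw [br, hGm2, br_mul]
    rw [show 2*(j:ℤ)+1 + 2*(2*(j:ℤ) - (N:ℤ) + 1)*p = (4*p+2)*(j:ℤ) + (2*p + 1 - 2*(N:ℤ)*p) from by ring,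
      show -(2*(j:ℤ)+1) - 2*(2*(j:ℤ) - (N:ℤ) + 1)*p = (-4*p-2)*(j:ℤ) + (2*(N:ℤ)*p - 2*p - 1) from by ring,
      show 2*(j:ℤ)+1 - 2*(2*(j:ℤ) - (N:ℤ) + 1)*p = (2-4*p)*(j:ℤ) + (1 - 2*p + 2*(N:ℤ)*p) from by ring,
      show -(2*(j:ℤ)+1) + 2*(2*(j:ℤ) - (N:ℤ) + 1)*p = (4*p-2)*(j:ℤ) + (2*p - 1 - 2*(N:ℤ)*p) from by ring]
  rw [Finset.sum_congr rfl (fun j _ => e2 j), ← Finset.mul_sum]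
  congr 1
  simp only [Finset.sum_sub_distrib, Finset.sum_add_distrib]
  rw [geom (4*p+2) (2*p + 1 - 2*(N:ℤ)*p) hz1 N,
    geom2 (-4*p-2) (2*(N:ℤ)*p - 2*p - 1) (q_zpow_ne_one (by omega)) N,
    geom2 (2-4*p) (1 - 2*p + 2*(N:ℤ)*p) (q_zpow_ne_one (by omega)) N,
    geom (4*p-2) (2*p - 1 - 2*(N:ℤ)*p) hz2 N]
  rw [show (4*p+2)*(N:ℤ) + (2*p + 1 - 2*(N:ℤ)*p) = 2*(N:ℤ)*p + (2*(N:ℤ) + (2*p + 1)) from by ring,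
    show 2*(N:ℤ)*p - 2*p - 1 - (-4*p-2) = 2*(N:ℤ)*p + (2*p + 1) from by ring,
    show (-4*p-2)*(N:ℤ) + (2*(N:ℤ)*p - 2*p - 1) - (-4*p-2) = 2*p + (1 + -(2*(N:ℤ)*p + 2*(N:ℤ))) from by ring,
    show 1 - 2*p + 2*(N:ℤ)*p - (2-4*p) = 2*(N:ℤ)*p + (2*p + -1) from by ring,
    show (2-4*p)*(N:ℤ) + (1 - 2*p + 2*(N:ℤ)*p) - (2-4*p) = 2*(N:ℤ) + (-(2*(N:ℤ)*p) + (2*p + -1)) from by ring,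
    show (4*p-2)*(N:ℤ) + (2*p - 1 - 2*(N:ℤ)*p) = 2*(N:ℤ)*p + (-(2*(N:ℤ)) + (2*p + -1)) from by ring,
    show (2*p + 1 - 2*(N:ℤ)*p) = 2*p + (1 + -(2*(N:ℤ)*p)) from by ring,
    show (2*p - 1 - 2*(N:ℤ)*p) = 2*p + (-1 + -(2*(N:ℤ)*p)) from by ring,
    show -(-4*p-2) = 2*p + (2*p + (1+1)) from by ring,
    show (4*p+2:ℤ) = 2*p + (2*p + (1+1)) from by ring,
    show -(2-4*p) = 2*p + (2*p + (-1 + -1)) from by ring,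
    show (4*p-2:ℤ) = 2*p + (2*p + (-1 + -1)) from by ring]
  simp only [zpow_add₀ q_ne, zpow_neg, zpow_one]
  ring

lemma hmix (p : ℤ) : (q^(2*p)*q⁻¹)⁻¹ = (q^(2*p))⁻¹ * q := by
  rw [mul_inv, inv_inv]

lemma key_lemma (p : ℤ) (N : ℕ) (hN : 1 ≤ N) :
    A (p+1) * ((-(q ^ (2*(N:ℤ)))) ^ (p+1) - (-(q ^ (2*(N:ℤ)))) ^ (-(p+1)))
      + (A p - A (p+1)) * ((-(q ^ (2*(N:ℤ)))) ^ p - (-(q ^ (2*(N:ℤ)))) ^ (-p))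
      + A (1-p) * ((-(q ^ (2*(N:ℤ)))) ^ (p-1) - (-(q ^ (2*(N:ℤ)))) ^ (-(p-1)))
    = -(t1 * q ^ (-(2*(N:ℤ))) + t1⁻¹ * q ^ (2*(N:ℤ)))
        * ((-(q ^ (2*(N:ℤ)))) ^ p - (-(q ^ (2*(N:ℤ)))) ^ (-p))
      + (t1 - t1⁻¹) * ∑ j ∈ Finset.Icc 1 (N-1), br (2*(j:ℤ)) *
          ((-(q ^ (2*(2*(j:ℤ) - (N:ℤ))))) ^ p - (-(q ^ (2*(2*(j:ℤ) - (N:ℤ))))) ^ (-p))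
      - (t2 - t2⁻¹) * ∑ j ∈ Finset.range N, br (2*(j:ℤ)+1) *
          ((-(q ^ (2*(2*(j:ℤ) - (N:ℤ) + 1)))) ^ p
            - (-(q ^ (2*(2*(j:ℤ) - (N:ℤ) + 1)))) ^ (-p)) := by
  have hv : q ^ (2*(N:ℤ)) ≠ 0 := zpow_ne_zero _ q_ne
  have hw : q ^ (2*(N:ℤ)*p) ≠ 0 := zpow_ne_zero _ q_ne
  have hD1 : q^(2*p)*q^(2*p)*q*q - 1 ≠ 0 := by
    have e : q^(2*p)*q^(2*p)*q*q = q^(4*p+2) := by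
      rw [show (4*p+2:ℤ) = 2*p+2*p+1+1 from by ring, zpow_add₀ q_ne, zpow_add₀ q_ne,
        zpow_add₀ q_ne, zpow_one]
    rw [e]
    exact sub_ne_zero.mpr (q_zpow_ne_one (by omega))
  have hD2 : q^(2*p)*q^(2*p) - q*q ≠ 0 := DD2_ne p
  have hxc : q * q⁻¹ = 1 := mul_inv_cancel₀ q_ne
  have huc : q^(2*p) * (q^(2*p))⁻¹ = 1 := mul_inv_cancel₀ (zpow_ne_zero _ q_ne)
  have hvc : q^(2*(N:ℤ)) * (q^(2*(N:ℤ)))⁻¹ = 1 := mul_inv_cancel₀ hv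
  have hwc : q^(2*(N:ℤ)*p) * (q^(2*(N:ℤ)*p))⁻¹ = 1 := mul_inv_cancel₀ hw
  have ht1c : t1 * t1⁻¹ = 1 := mul_inv_cancel₀ t1_ne
  have ht2c : t2 * t2⁻¹ = 1 := mul_inv_cancel₀ t2_ne
  have hD1c : (q^(2*p)*(q^(2*p)*(q*q)) - 1) * (q^(2*p)*(q^(2*p)*(q*q)) - 1)⁻¹ = 1 :=
    mul_inv_cancel₀ (DD1_ne p)
  have hD2c : (q^(2*p)*q^(2*p) - q*q) * (q^(2*p)*q^(2*p) - q*q)⁻¹ = 1 :=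
    mul_inv_cancel₀ (DD2_ne p)
  have hgen := gen0 q (q^(2*p)) (q^(2*(N:ℤ))) (q^(2*(N:ℤ)*p)) t1 t2 hv hw t1_ne t2_ne hD1 hD2
  rw [A_p1, A_p, A_1mp, cpow1, cpow2, cpow0, S1_closed p N hN, S2_closed p N hN,
    zpow_neg q (2*(N:ℤ)), hjAsub p, hjBsub p, hjCsub p, hE2sub p, hmix p]
  linear_combination ((-1:F)^p) * hgen + ((-1:F)*q^(2*p)*t1*((-1:F)^p)*(q^(2*p))⁻¹*(q^(2*(N:ℤ)))⁻¹*(q^(2*(N:ℤ)*p))⁻¹*(q^(2*p)*(q^(2*p)*(q*q)) - 1)⁻¹ + (-1:F)*q^(2*p)*t1*((-1:F)^p)*(q^(2*p))⁻¹*(q^(2*(N:ℤ)*p))⁻¹*(q^(2*p)*(q^(2*p)*(q*q)) - 1)⁻¹ + q^(2*p)*q^(2*(N:ℤ))*q^(2*(N:ℤ)*p)*t1*((-1:F)^p)*(q^(2*p))⁻¹*(q^(2*p)*(q^(2*p)*(q*q)) - 1)⁻¹ + q^(2*p)*q^(2*(N:ℤ)*p)*t1*((-1:F)^p)*(q^(2*p))⁻¹*(q^(2*p)*(q^(2*p)*(q*q))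 - 1)⁻¹ + q*(q^(2*p))^2*q^(2*(N:ℤ))*((-1:F)^p)*q⁻¹*(q^(2*(N:ℤ)*p))⁻¹*t1⁻¹*(q^(2*p)*q^(2*p) - q*q)⁻¹ + (q^(2*p))^2*q^(2*(N:ℤ))*((-1:F)^p)*(q^(2*(N:ℤ)*p))⁻¹*t1⁻¹*(q^(2*p)*q^(2*p) - q*q)⁻¹ + (-1:F)*(q^(2*p))^2*((-1:F)^p)*(q^(2*(N:ℤ)*p))⁻¹*t1⁻¹*(q^(2*p)*q^(2*p) - q*q)⁻¹ + (-1:F)*q*(q^(2*p))^2*q^(2*(N:ℤ)*p)*((-1:F)^p)*q⁻¹*t1⁻¹*(q^(2*p)*q^(2*p) - q*q)⁻¹ + q*q^(2*p)*q^(2*(N:ℤ)*p)*((-1:F)^p)*(q^(2*(N:ℤ)))⁻¹*t2⁻¹*(q^(2*p)*q^(2*p) - q*q)⁻¹ + (-1:F)*q*q^(2*p)*q^(2*(N:ℤ))*((-1:F)^p)*(q^(2*(N:ℤ)*p))⁻¹*t2⁻¹*(q^(2*p)*q^(2*p) - q*q)⁻¹ + (-1:F)*q*q^(2*p)*((-1:F)^p)*(q^(2*(N:ℤ)*p))⁻¹*t2⁻¹*(q^(2*p)*q^(2*p)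 - q*q)⁻¹ + q*q^(2*p)*q^(2*(N:ℤ)*p)*((-1:F)^p)*t2⁻¹*(q^(2*p)*q^(2*p) - q*q)⁻¹ + (-1:F)*(q^(2*p))^2*q^(2*(N:ℤ)*p)*t1*((-1:F)^p)*(q^(2*(N:ℤ)))⁻¹*(q^(2*p)*q^(2*p) - q*q)⁻¹ + (-1:F)*q*q^(2*p)*q^(2*(N:ℤ)*p)*t2*((-1:F)^p)*(q^(2*(N:ℤ)))⁻¹*(q^(2*p)*q^(2*p) - q*q)⁻¹ + (-1:F)*q*(q^(2*p))^2*q^(2*(N:ℤ))*t1*((-1:F)^p)*q⁻¹*(q^(2*(N:ℤ)*p))⁻¹*(q^(2*p)*q^(2*p) - q*q)⁻¹ + q*q^(2*p)*q^(2*(N:ℤ))*t2*((-1:F)^p)*(q^(2*(N:ℤ)*p))⁻¹*(q^(2*p)*q^(2*p) - q*q)⁻¹ + q*q^(2*p)*t2*((-1:F)^p)*(q^(2*(N:ℤ)*p))⁻¹*(q^(2*p)*q^(2*p) - q*q)⁻¹ + q*(q^(2*p))^2*q^(2*(N:ℤ)*p)*t1*((-1:F)^p)*q⁻¹*(q^(2*p)*q^(2*p)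 - q*q)⁻¹ + (q^(2*p))^2*q^(2*(N:ℤ)*p)*t1*((-1:F)^p)*(q^(2*p)*q^(2*p) - q*q)⁻¹ + (-1:F)*q*q^(2*p)*q^(2*(N:ℤ)*p)*t2*((-1:F)^p)*(q^(2*p)*q^(2*p) - q*q)⁻¹) * hxc + ((-1:F)*t1*((-1:F)^p)*(q^(2*(N:ℤ)))⁻¹*(q^(2*(N:ℤ)*p))⁻¹*(q^(2*p)*(q^(2*p)*(q*q)) - 1)⁻¹ + (-1:F)*t1*((-1:F)^p)*(q^(2*(N:ℤ)*p))⁻¹*(q^(2*p)*(q^(2*p)*(q*q)) - 1)⁻¹ + q^(2*(N:ℤ))*q^(2*(N:ℤ)*p)*t1*((-1:F)^p)*(q^(2*p)*(q^(2*p)*(q*q)) - 1)⁻¹ + q^(2*(N:ℤ)*p)*t1*((-1:F)^p)*(q^(2*p)*(q^(2*p)*(q*q)) - 1)⁻¹ + (q)^2*q^(2*(N:ℤ)*p)*((-1:F)^p)*(q^(2*(N:ℤ)))⁻¹*t1⁻¹*(q^(2*p)*q^(2*p) - q*q)⁻¹ + (-1:F)*(q)^2*q^(2*(N:ℤ))*((-1:F)^p)*(q^(2*(N:ℤ)*p))⁻¹*t1⁻¹*(q^(2*p)*q^(2*p)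 - q*q)⁻¹ + (q)^2*t1*((-1:F)^p)*(q^(2*(N:ℤ)*p))⁻¹*(q^(2*p)*q^(2*p) - q*q)⁻¹ + (-1:F)*(q)^2*q^(2*(N:ℤ)*p)*t1*((-1:F)^p)*(q^(2*p)*q^(2*p) - q*q)⁻¹) * huc + ((q)^2*(q^(2*p))^2*q^(2*(N:ℤ))*(q^(2*(N:ℤ)*p))^2*t2*((-1:F)^p)*(q^(2*(N:ℤ)*p))⁻¹*t1⁻¹*t2⁻¹*(q^(2*p)*(q^(2*p)*(q*q)) - 1)⁻¹ + q*q^(2*p)*q^(2*(N:ℤ))*(q^(2*(N:ℤ)*p))^2*t1*(t2)^2*((-1:F)^p)*(q^(2*(N:ℤ)*p))⁻¹*t1⁻¹*t2⁻¹*(q^(2*p)*(q^(2*p)*(q*q)) - 1)⁻¹ + (-1:F)*q*q^(2*p)*q^(2*(N:ℤ))*(q^(2*(N:ℤ)*p))^2*t1*((-1:F)^p)*(q^(2*(N:ℤ)*p))⁻¹*t1⁻¹*t2⁻¹*(q^(2*p)*(q^(2*p)*(q*q)) - 1)⁻¹ + (-1:F)*q^(2*(N:ℤ))*(q^(2*(N:ℤ)*p))^2*(t1)^2*t2*((-1:F)^p)*(q^(2*(N:ℤ)*p))⁻¹*t1⁻¹*t2⁻¹*(q^(2*p)*(q^(2*p)*(q*q))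 - 1)⁻¹ + (-1:F)*(q^(2*(N:ℤ)*p))^2*((-1:F)^p)*(q^(2*(N:ℤ)*p))⁻¹*t1⁻¹*(q^(2*p)*(q^(2*p)*(q*q)) - 1)⁻¹ + q*q^(2*p)*(q^(2*(N:ℤ)*p))^2*((-1:F)^p)*(q^(2*(N:ℤ)*p))⁻¹*t2⁻¹*(q^(2*p)*(q^(2*p)*(q*q)) - 1)⁻¹ + (-1:F)*q*q^(2*p)*(q^(2*(N:ℤ)*p))^2*t2*((-1:F)^p)*(q^(2*(N:ℤ)*p))⁻¹*(q^(2*p)*(q^(2*p)*(q*q)) - 1)⁻¹ + (q^(2*(N:ℤ)*p))^2*t1*((-1:F)^p)*(q^(2*(N:ℤ)*p))⁻¹*(q^(2*p)*(q^(2*p)*(q*q)) - 1)⁻¹ + (-1:F)*(q^(2*p))^2*q^(2*(N:ℤ))*(t1)^2*t2*((-1:F)^p)*(q^(2*(N:ℤ)*p))⁻¹*t1⁻¹*t2⁻¹*(q^(2*p)*q^(2*p) - q*q)⁻¹ + q*q^(2*p)*q^(2*(N:ℤ))*t1*(t2)^2*((-1:F)^p)*(q^(2*(N:ℤ)*p))⁻¹*t1⁻¹*t2⁻¹*(q^(2*p)*q^(2*p)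 - q*q)⁻¹ + (-1:F)*q*q^(2*p)*q^(2*(N:ℤ))*t1*((-1:F)^p)*(q^(2*(N:ℤ)*p))⁻¹*t1⁻¹*t2⁻¹*(q^(2*p)*q^(2*p) - q*q)⁻¹ + (q)^2*q^(2*(N:ℤ))*t2*((-1:F)^p)*(q^(2*(N:ℤ)*p))⁻¹*t1⁻¹*t2⁻¹*(q^(2*p)*q^(2*p) - q*q)⁻¹ + (-1:F)*(q^(2*p))^2*((-1:F)^p)*(q^(2*(N:ℤ)*p))⁻¹*t1⁻¹*(q^(2*p)*q^(2*p) - q*q)⁻¹ + q*q^(2*p)*((-1:F)^p)*(q^(2*(N:ℤ)*p))⁻¹*t2⁻¹*(q^(2*p)*q^(2*p) - q*q)⁻¹ + (q^(2*p))^2*t1*((-1:F)^p)*(q^(2*(N:ℤ)*p))⁻¹*(q^(2*p)*q^(2*p) - q*q)⁻¹ + (-1:F)*q*q^(2*p)*t2*((-1:F)^p)*(q^(2*(N:ℤ)*p))⁻¹*(q^(2*p)*q^(2*p) - q*q)⁻¹ + (-1:F)*q^(2*(N:ℤ))*(q^(2*(N:ℤ)*p))^2*((-1:F)^p)*(q^(2*(N:ℤ)*p))⁻¹*t1⁻¹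 + q^(2*(N:ℤ))*((-1:F)^p)*(q^(2*(N:ℤ)*p))⁻¹*t1⁻¹) * hvc + ((q)^2*(q^(2*p))^2*q^(2*(N:ℤ))*q^(2*(N:ℤ)*p)*t2*((-1:F)^p)*t1⁻¹*t2⁻¹*(q^(2*p)*(q^(2*p)*(q*q)) - 1)⁻¹ + (q)^2*(q^(2*p))^2*q^(2*(N:ℤ)*p)*t2*((-1:F)^p)*t1⁻¹*t2⁻¹*(q^(2*p)*(q^(2*p)*(q*q)) - 1)⁻¹ + q*q^(2*p)*q^(2*(N:ℤ))*q^(2*(N:ℤ)*p)*t1*(t2)^2*((-1:F)^p)*t1⁻¹*t2⁻¹*(q^(2*p)*(q^(2*p)*(q*q)) - 1)⁻¹ + q*q^(2*p)*q^(2*(N:ℤ)*p)*t1*(t2)^2*((-1:F)^p)*t1⁻¹*t2⁻¹*(q^(2*p)*(q^(2*p)*(q*q)) - 1)⁻¹ + (-1:F)*q*q^(2*p)*q^(2*(N:ℤ))*q^(2*(N:ℤ)*p)*t1*((-1:F)^p)*t1⁻¹*t2⁻¹*(q^(2*p)*(q^(2*p)*(q*q)) - 1)⁻¹ + (-1:F)*q*q^(2*p)*q^(2*(N:ℤ)*p)*t1*((-1:F)^p)*t1⁻¹*t2⁻¹*(q^(2*p)*(q^(2*p)*(q*q))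 - 1)⁻¹ + (-1:F)*q^(2*(N:ℤ))*q^(2*(N:ℤ)*p)*(t1)^2*t2*((-1:F)^p)*t1⁻¹*t2⁻¹*(q^(2*p)*(q^(2*p)*(q*q)) - 1)⁻¹ + (-1:F)*q^(2*(N:ℤ)*p)*(t1)^2*t2*((-1:F)^p)*t1⁻¹*t2⁻¹*(q^(2*p)*(q^(2*p)*(q*q)) - 1)⁻¹ + (-1:F)*q^(2*(N:ℤ))*q^(2*(N:ℤ)*p)*((-1:F)^p)*t1⁻¹*(q^(2*p)*(q^(2*p)*(q*q)) - 1)⁻¹ + (-1:F)*q^(2*(N:ℤ)*p)*((-1:F)^p)*t1⁻¹*(q^(2*p)*(q^(2*p)*(q*q)) - 1)⁻¹ + q*q^(2*p)*q^(2*(N:ℤ))*q^(2*(N:ℤ)*p)*((-1:F)^p)*t2⁻¹*(q^(2*p)*(q^(2*p)*(q*q)) - 1)⁻¹ + q*q^(2*p)*q^(2*(N:ℤ)*p)*((-1:F)^p)*t2⁻¹*(q^(2*p)*(q^(2*p)*(q*q)) - 1)⁻¹ + (-1:F)*q*q^(2*p)*q^(2*(N:ℤ))*q^(2*(N:ℤ)*p)*t2*((-1:F)^p)*(q^(2*p)*(q^(2*p)*(q*q))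 - 1)⁻¹ + (-1:F)*q*q^(2*p)*q^(2*(N:ℤ)*p)*t2*((-1:F)^p)*(q^(2*p)*(q^(2*p)*(q*q)) - 1)⁻¹ + q^(2*(N:ℤ))*q^(2*(N:ℤ)*p)*t1*((-1:F)^p)*(q^(2*p)*(q^(2*p)*(q*q)) - 1)⁻¹ + q^(2*(N:ℤ)*p)*t1*((-1:F)^p)*(q^(2*p)*(q^(2*p)*(q*q)) - 1)⁻¹ + (q^(2*p))^2*q^(2*(N:ℤ)*p)*(t1)^2*t2*((-1:F)^p)*(q^(2*(N:ℤ)))⁻¹*t1⁻¹*t2⁻¹*(q^(2*p)*q^(2*p) - q*q)⁻¹ + (-1:F)*q*q^(2*p)*q^(2*(N:ℤ)*p)*t1*(t2)^2*((-1:F)^p)*(q^(2*(N:ℤ)))⁻¹*t1⁻¹*t2⁻¹*(q^(2*p)*q^(2*p) - q*q)⁻¹ + q*q^(2*p)*q^(2*(N:ℤ)*p)*t1*((-1:F)^p)*(q^(2*(N:ℤ)))⁻¹*t1⁻¹*t2⁻¹*(q^(2*p)*q^(2*p) - q*q)⁻¹ + (-1:F)*(q)^2*q^(2*(N:ℤ)*p)*t2*((-1:F)^p)*(q^(2*(N:ℤ)))⁻¹*t1⁻¹*t2⁻¹*(q^(2*p)*q^(2*p)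 - q*q)⁻¹ + (-1:F)*(q^(2*p))^2*q^(2*(N:ℤ)*p)*t2*((-1:F)^p)*t1⁻¹*t2⁻¹*(q^(2*p)*q^(2*p) - q*q)⁻¹ + (-1:F)*q*q^(2*p)*q^(2*(N:ℤ)*p)*t1*(t2)^2*((-1:F)^p)*t1⁻¹*t2⁻¹*(q^(2*p)*q^(2*p) - q*q)⁻¹ + q*q^(2*p)*q^(2*(N:ℤ)*p)*t1*((-1:F)^p)*t1⁻¹*t2⁻¹*(q^(2*p)*q^(2*p) - q*q)⁻¹ + (q)^2*q^(2*(N:ℤ)*p)*(t1)^2*t2*((-1:F)^p)*t1⁻¹*t2⁻¹*(q^(2*p)*q^(2*p) - q*q)⁻¹ + (q)^2*q^(2*(N:ℤ)*p)*((-1:F)^p)*(q^(2*(N:ℤ)))⁻¹*t1⁻¹*(q^(2*p)*q^(2*p) - q*q)⁻¹ + (q)^2*q^(2*(N:ℤ)*p)*((-1:F)^p)*t1⁻¹*(q^(2*p)*q^(2*p) - q*q)⁻¹ + (-1:F)*q*q^(2*p)*q^(2*(N:ℤ)*p)*((-1:F)^p)*(q^(2*(N:ℤ)))⁻¹*t2⁻¹*(q^(2*p)*q^(2*p)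 - q*q)⁻¹ + (-1:F)*q*q^(2*p)*q^(2*(N:ℤ)*p)*((-1:F)^p)*t2⁻¹*(q^(2*p)*q^(2*p) - q*q)⁻¹ + q*q^(2*p)*q^(2*(N:ℤ)*p)*t2*((-1:F)^p)*(q^(2*(N:ℤ)))⁻¹*(q^(2*p)*q^(2*p) - q*q)⁻¹ + (-1:F)*(q)^2*q^(2*(N:ℤ)*p)*t1*((-1:F)^p)*(q^(2*(N:ℤ)))⁻¹*(q^(2*p)*q^(2*p) - q*q)⁻¹ + q*q^(2*p)*q^(2*(N:ℤ)*p)*t2*((-1:F)^p)*(q^(2*p)*q^(2*p) - q*q)⁻¹ + (-1:F)*(q)^2*q^(2*(N:ℤ)*p)*t1*((-1:F)^p)*(q^(2*p)*q^(2*p) - q*q)⁻¹ + (-1:F)*q^(2*(N:ℤ)*p)*(t1)^2*((-1:F)^p)*(q^(2*(N:ℤ)))⁻¹*t1⁻¹ + (-1:F)*q^(2*(N:ℤ))*q^(2*(N:ℤ)*p)*((-1:F)^p)*t1⁻¹) * hwc + ((-1:F)*q*q^(2*p)*(t2)^2*((-1:F)^p)*(q^(2*(N:ℤ)))⁻¹*(q^(2*(N:ℤ)*p))⁻¹*t2⁻¹*(q^(2*p)*(q^(2*p)*(q*q))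 - 1)⁻¹ + q*q^(2*p)*((-1:F)^p)*(q^(2*(N:ℤ)))⁻¹*(q^(2*(N:ℤ)*p))⁻¹*t2⁻¹*(q^(2*p)*(q^(2*p)*(q*q)) - 1)⁻¹ + t1*t2*((-1:F)^p)*(q^(2*(N:ℤ)))⁻¹*(q^(2*(N:ℤ)*p))⁻¹*t2⁻¹*(q^(2*p)*(q^(2*p)*(q*q)) - 1)⁻¹ + (-1:F)*q*q^(2*p)*(t2)^2*((-1:F)^p)*(q^(2*(N:ℤ)*p))⁻¹*t2⁻¹*(q^(2*p)*(q^(2*p)*(q*q)) - 1)⁻¹ + q*q^(2*p)*((-1:F)^p)*(q^(2*(N:ℤ)*p))⁻¹*t2⁻¹*(q^(2*p)*(q^(2*p)*(q*q)) - 1)⁻¹ + t1*t2*((-1:F)^p)*(q^(2*(N:ℤ)*p))⁻¹*t2⁻¹*(q^(2*p)*(q^(2*p)*(q*q)) - 1)⁻¹ + q*q^(2*p)*q^(2*(N:ℤ))*q^(2*(N:ℤ)*p)*(t2)^2*((-1:F)^p)*t2⁻¹*(q^(2*p)*(q^(2*p)*(q*q)) - 1)⁻¹ + q*q^(2*p)*q^(2*(N:ℤ)*p)*(t2)^2*((-1:F)^p)*t2⁻¹*(q^(2*p)*(q^(2*p)*(q*q))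 - 1)⁻¹ + (-1:F)*q*q^(2*p)*q^(2*(N:ℤ))*q^(2*(N:ℤ)*p)*((-1:F)^p)*t2⁻¹*(q^(2*p)*(q^(2*p)*(q*q)) - 1)⁻¹ + (-1:F)*q*q^(2*p)*q^(2*(N:ℤ)*p)*((-1:F)^p)*t2⁻¹*(q^(2*p)*(q^(2*p)*(q*q)) - 1)⁻¹ + (-1:F)*q^(2*(N:ℤ))*q^(2*(N:ℤ)*p)*t1*t2*((-1:F)^p)*t2⁻¹*(q^(2*p)*(q^(2*p)*(q*q)) - 1)⁻¹ + (-1:F)*q^(2*(N:ℤ)*p)*t1*t2*((-1:F)^p)*t2⁻¹*(q^(2*p)*(q^(2*p)*(q*q)) - 1)⁻¹ + (q^(2*p))^2*q^(2*(N:ℤ)*p)*t1*t2*((-1:F)^p)*(q^(2*(N:ℤ)))⁻¹*t2⁻¹*(q^(2*p)*q^(2*p) - q*q)⁻¹ + (-1:F)*q*q^(2*p)*q^(2*(N:ℤ)*p)*(t2)^2*((-1:F)^p)*(q^(2*(N:ℤ)))⁻¹*t2⁻¹*(q^(2*p)*q^(2*p) - q*q)⁻¹ + q*q^(2*p)*q^(2*(N:ℤ)*p)*((-1:F)^p)*(q^(2*(N:ℤ)))⁻¹*t2⁻¹*(q^(2*p)*q^(2*p)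 - q*q)⁻¹ + (-1:F)*(q^(2*p))^2*q^(2*(N:ℤ))*t1*t2*((-1:F)^p)*(q^(2*(N:ℤ)*p))⁻¹*t2⁻¹*(q^(2*p)*q^(2*p) - q*q)⁻¹ + q*q^(2*p)*q^(2*(N:ℤ))*(t2)^2*((-1:F)^p)*(q^(2*(N:ℤ)*p))⁻¹*t2⁻¹*(q^(2*p)*q^(2*p) - q*q)⁻¹ + q*q^(2*p)*(t2)^2*((-1:F)^p)*(q^(2*(N:ℤ)*p))⁻¹*t2⁻¹*(q^(2*p)*q^(2*p) - q*q)⁻¹ + (-1:F)*q*q^(2*p)*q^(2*(N:ℤ))*((-1:F)^p)*(q^(2*(N:ℤ)*p))⁻¹*t2⁻¹*(q^(2*p)*q^(2*p) - q*q)⁻¹ + (-1:F)*q*q^(2*p)*((-1:F)^p)*(q^(2*(N:ℤ)*p))⁻¹*t2⁻¹*(q^(2*p)*q^(2*p) - q*q)⁻¹ + (-1:F)*(q)^2*t1*t2*((-1:F)^p)*(q^(2*(N:ℤ)*p))⁻¹*t2⁻¹*(q^(2*p)*q^(2*p) - q*q)⁻¹ + (-1:F)*q*q^(2*p)*q^(2*(N:ℤ)*p)*(t2)^2*((-1:F)^p)*t2⁻¹*(q^(2*p)*q^(2*p)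 - q*q)⁻¹ + q*q^(2*p)*q^(2*(N:ℤ)*p)*((-1:F)^p)*t2⁻¹*(q^(2*p)*q^(2*p) - q*q)⁻¹ + (q)^2*q^(2*(N:ℤ)*p)*t1*t2*((-1:F)^p)*t2⁻¹*(q^(2*p)*q^(2*p) - q*q)⁻¹ + t1*((-1:F)^p)*(q^(2*(N:ℤ)))⁻¹*(q^(2*(N:ℤ)*p))⁻¹ + (-1:F)*q^(2*(N:ℤ)*p)*t1*((-1:F)^p)*(q^(2*(N:ℤ)))⁻¹) * ht1c + ((-1:F)*(q)^2*(q^(2*p))^2*((-1:F)^p)*(q^(2*(N:ℤ)))⁻¹*(q^(2*(N:ℤ)*p))⁻¹*t1⁻¹*(q^(2*p)*(q^(2*p)*(q*q)) - 1)⁻¹ + (-1:F)*(q)^2*(q^(2*p))^2*((-1:F)^p)*(q^(2*(N:ℤ)*p))⁻¹*t1⁻¹*(q^(2*p)*(q^(2*p)*(q*q)) - 1)⁻¹ + (q)^2*(q^(2*p))^2*q^(2*(N:ℤ))*q^(2*(N:ℤ)*p)*((-1:F)^p)*t1⁻¹*(q^(2*p)*(q^(2*p)*(q*q)) - 1)⁻¹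 + (q)^2*(q^(2*p))^2*q^(2*(N:ℤ)*p)*((-1:F)^p)*t1⁻¹*(q^(2*p)*(q^(2*p)*(q*q)) - 1)⁻¹ + (-1:F)*q*q^(2*p)*t2*((-1:F)^p)*(q^(2*(N:ℤ)))⁻¹*(q^(2*(N:ℤ)*p))⁻¹*(q^(2*p)*(q^(2*p)*(q*q)) - 1)⁻¹ + t1*((-1:F)^p)*(q^(2*(N:ℤ)))⁻¹*(q^(2*(N:ℤ)*p))⁻¹*(q^(2*p)*(q^(2*p)*(q*q)) - 1)⁻¹ + (-1:F)*q*q^(2*p)*t2*((-1:F)^p)*(q^(2*(N:ℤ)*p))⁻¹*(q^(2*p)*(q^(2*p)*(q*q)) - 1)⁻¹ + t1*((-1:F)^p)*(q^(2*(N:ℤ)*p))⁻¹*(q^(2*p)*(q^(2*p)*(q*q)) - 1)⁻¹ + q*q^(2*p)*q^(2*(N:ℤ))*q^(2*(N:ℤ)*p)*t2*((-1:F)^p)*(q^(2*p)*(q^(2*p)*(q*q)) - 1)⁻¹ + q*q^(2*p)*q^(2*(N:ℤ)*p)*t2*((-1:F)^p)*(q^(2*p)*(q^(2*p)*(q*q))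 - 1)⁻¹ + (-1:F)*q^(2*(N:ℤ))*q^(2*(N:ℤ)*p)*t1*((-1:F)^p)*(q^(2*p)*(q^(2*p)*(q*q)) - 1)⁻¹ + (-1:F)*q^(2*(N:ℤ)*p)*t1*((-1:F)^p)*(q^(2*p)*(q^(2*p)*(q*q)) - 1)⁻¹ + (-1:F)*(q)^2*q^(2*(N:ℤ)*p)*((-1:F)^p)*(q^(2*(N:ℤ)))⁻¹*t1⁻¹*(q^(2*p)*q^(2*p) - q*q)⁻¹ + (q^(2*p))^2*((-1:F)^p)*(q^(2*(N:ℤ)*p))⁻¹*t1⁻¹*(q^(2*p)*q^(2*p) - q*q)⁻¹ + (q)^2*q^(2*(N:ℤ))*((-1:F)^p)*(q^(2*(N:ℤ)*p))⁻¹*t1⁻¹*(q^(2*p)*q^(2*p) - q*q)⁻¹ + (-1:F)*(q^(2*p))^2*q^(2*(N:ℤ)*p)*((-1:F)^p)*t1⁻¹*(q^(2*p)*q^(2*p) - q*q)⁻¹ + (q^(2*p))^2*q^(2*(N:ℤ)*p)*t1*((-1:F)^p)*(q^(2*(N:ℤ)))⁻¹*(q^(2*p)*q^(2*p) - q*q)⁻¹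 + (-1:F)*q*q^(2*p)*q^(2*(N:ℤ)*p)*t2*((-1:F)^p)*(q^(2*(N:ℤ)))⁻¹*(q^(2*p)*q^(2*p) - q*q)⁻¹ + (-1:F)*(q^(2*p))^2*q^(2*(N:ℤ))*t1*((-1:F)^p)*(q^(2*(N:ℤ)*p))⁻¹*(q^(2*p)*q^(2*p) - q*q)⁻¹ + q*q^(2*p)*q^(2*(N:ℤ))*t2*((-1:F)^p)*(q^(2*(N:ℤ)*p))⁻¹*(q^(2*p)*q^(2*p) - q*q)⁻¹ + q*q^(2*p)*t2*((-1:F)^p)*(q^(2*(N:ℤ)*p))⁻¹*(q^(2*p)*q^(2*p) - q*q)⁻¹ + (-1:F)*(q)^2*t1*((-1:F)^p)*(q^(2*(N:ℤ)*p))⁻¹*(q^(2*p)*q^(2*p) - q*q)⁻¹ + (-1:F)*q*q^(2*p)*q^(2*(N:ℤ)*p)*t2*((-1:F)^p)*(q^(2*p)*q^(2*p) - q*q)⁻¹ + (q)^2*q^(2*(N:ℤ)*p)*t1*((-1:F)^p)*(q^(2*p)*q^(2*p) - q*q)⁻¹) * ht2c + (((-1:F)^p)*(q^(2*(N:ℤ)*p))⁻¹*t1⁻¹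 + q^(2*(N:ℤ)*p)*((-1:F)^p)*t1⁻¹ + (-1:F)*t1*((-1:F)^p)*(q^(2*(N:ℤ)*p))⁻¹ + (-1:F)*q^(2*(N:ℤ)*p)*t1*((-1:F)^p)) * hD1c + ((-1:F)*((-1:F)^p)*(q^(2*(N:ℤ)*p))⁻¹*t1⁻¹ + (-1:F)*q^(2*(N:ℤ)*p)*((-1:F)^p)*t1⁻¹ + t1*((-1:F)^p)*(q^(2*(N:ℤ)*p))⁻¹ + q^(2*(N:ℤ)*p)*t1*((-1:F)^p)) * hD2c

/-- The coefficients `a_{n,p}` defined by the DAHA recurrence. -/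
def a : ℕ → ℤ → F
  | 0, _ => 0
  | 1, p => if p = 1 then 1 else if p = -1 then -1 else 0
  | n + 2, p =>
      A p * a (n + 1) (p - 1) + (A p - A (p + 1)) * a (n + 1) p
        + A (-p) * a (n + 1) (p + 1) - a n p

lemma a_neg : ∀ (n : ℕ) (p : ℤ), a n (-p) = - a n p := by
  intro n
  induction n using Nat.strong_induction_on with
  | _ n ih =>
    match n with
    | 0 => intro p; simp [a]
    | 1 =>
      intro p
      simp only [a]
      split_ifs with h1 h2 h3 h4 <;> first | (exfalso; omega) | norm_num
    | (m + 2) =>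
      intro p
      have e1 : a (m + 2) (-p) = A (-p) * a (m + 1) (-p - 1) + (A (-p) - A (-p + 1)) * a (m + 1) (-p)
          + A (-(-p)) * a (m + 1) (-p + 1) - a m (-p) := rfl
      have e2 : a (m + 2) p = A p * a (m + 1) (p - 1) + (A p - A (p + 1)) * a (m + 1) p
          + A (-p) * a (m + 1) (p + 1) - a m p := rfl
      rw [e1, e2, show -p - 1 = -(p + 1) from by ring, show -p + 1 = -(p - 1) from by ring,
        ih (m + 1) (by omega) (p + 1), ih (m + 1) (by omega) p, ih (m + 1) (by omega) (p - 1),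
        ih m (by omega) p, neg_neg]
      linear_combination (- a (m + 1) p) * A_diff p

lemma a_zero (n : ℕ) : a n 0 = 0 := by
  have h := a_neg n 0
  rw [neg_zero] at h
  have h2 : (2 : F) * a n 0 = 0 := by linear_combination h
  have := mul_eq_zero.mp h2
  rcases this with h | h
  · exact absurd h two_ne_zero
  · exact h

lemma a_gt : ∀ (n : ℕ) (p : ℤ), (n : ℤ) < p → a n p = 0 := by
  intro n
  induction n using Nat.strong_induction_on with
  | _ n ih =>
    match n with
    | 0 => intro p _; rfl
    | 1 =>
      intro p hp
      simp only [a]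
      split_ifs with h1 h2 <;> first | rfl | (exfalso; omega)
    | (m + 2) =>
      intro p hp
      have e2 : a (m + 2) p = A p * a (m + 1) (p - 1) + (A p - A (p + 1)) * a (m + 1) p
          + A (-p) * a (m + 1) (p + 1) - a m p := rfl
      rw [e2, ih (m + 1) (by omega) (p - 1) (by push_cast; omega),
        ih (m + 1) (by omega) p (by push_cast; omega),
        ih (m + 1) (by omega) (p + 1) (by push_cast; omega),
        ih m (by omega) p (by push_cast; omega)]
      ring

/-- The evaluation `f_n(c)` of the Laurent polynomial
`f_n = ∑_{p=1}^{n} a_{n,p}(U^p − U^{−p})` at `U = c`. -/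
def fev (n : ℕ) (c : F) : F :=
  ∑ p ∈ Finset.Icc (1 : ℤ) (n : ℤ), a n p * (c ^ p - c ^ (-p))

lemma shiftg (a b : ℤ) (f : ℤ → F) :
    ∑ x ∈ Finset.Icc (a + 1) (b + 1), f x = ∑ x ∈ Finset.Icc a b, f (x + 1) := by
  rw [← Finset.map_add_right_Icc, Finset.sum_map]
  simp only [addRightEmbedding_apply]

lemma shiftg' (a b a' b' : ℤ) (h1 : a' = a + 1) (h2 : b' = b + 1) (f : ℤ → F) :
    ∑ x ∈ Finset.Icc a' b', f x = ∑ x ∈ Finset.Icc a b, f (x + 1) := by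
  subst h1 h2
  exact shiftg a b f

lemma step1 (m N : ℕ) :
    fev (m + 1 + 1) (-(q ^ (2 * (N : ℤ)))) + fev m (-(q ^ (2 * (N : ℤ))))
      = ∑ p' ∈ Finset.Icc (1 : ℤ) ((m : ℤ) + 1), a (m + 1) p' *
          (A (p' + 1) * ((-(q ^ (2 * (N : ℤ)))) ^ (p' + 1) - (-(q ^ (2 * (N : ℤ)))) ^ (-(p' + 1)))
            + (A p' - A (p' + 1)) * ((-(q ^ (2 * (N : ℤ)))) ^ p' - (-(q ^ (2 * (N : ℤ)))) ^ (-p'))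
            + A (1 - p') * ((-(q ^ (2 * (N : ℤ)))) ^ (p' - 1) - (-(q ^ (2 * (N : ℤ)))) ^ (-(p' - 1)))) := by
  set C : F := -(q ^ (2 * (N : ℤ))) with hC
  simp only [fev]
  have hcast : ((m + 1 + 1 : ℕ) : ℤ) = (m : ℤ) + 1 + 1 := by push_cast; ring
  rw [hcast]
  have hrec : ∀ p' : ℤ, a (m + 1 + 1) p' * (C ^ p' - C ^ (-p'))
      = a (m + 1) (p' - 1) * (A p' * (C ^ p' - C ^ (-p')))
        + a (m + 1) p' * ((A p' - A (p' + 1)) * (C ^ p' - C ^ (-p')))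
        + a (m + 1) (p' + 1) * (A (-p') * (C ^ p' - C ^ (-p')))
        - a m p' * (C ^ p' - C ^ (-p')) := by
    intro p'
    have : a (m + 1 + 1) p' = A p' * a (m + 1) (p' - 1) + (A p' - A (p' + 1)) * a (m + 1) p'
        + A (-p') * a (m + 1) (p' + 1) - a m p' := rfl
    rw [this]
    ring
  rw [Finset.sum_congr rfl (fun p' _ => hrec p')]
  simp only [Finset.sum_sub_distrib, Finset.sum_add_distrib]
  -- the a m - sum cancels with fev m
  have hD : ∑ p' ∈ Finset.Icc (1 : ℤ) ((m : ℤ) + 1 + 1), a m p' * (C ^ p' - C ^ (-p'))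
      = ∑ p' ∈ Finset.Icc (1 : ℤ) (m : ℤ), a m p' * (C ^ p' - C ^ (-p')) := by
    refine (Finset.sum_subset (Finset.Icc_subset_Icc_right (by omega)) ?_).symm
    intro x hx hnx
    simp only [Finset.mem_Icc] at hx hnx
    rw [a_gt m x (by omega), zero_mul]
  rw [hD]
  -- shift the A-sum
  have hA : ∑ p' ∈ Finset.Icc (1 : ℤ) ((m : ℤ) + 1 + 1), a (m + 1) (p' - 1) * (A p' * (C ^ p' - C ^ (-p')))
      = ∑ x ∈ Finset.Icc (1 : ℤ) ((m : ℤ) + 1), a (m + 1) x * (A (x + 1) * (C ^ (x + 1) - C ^ (-(x + 1)))) := by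
    rw [shiftg' 0 ((m : ℤ) + 1) 1 ((m : ℤ) + 1 + 1) (by norm_num) rfl
      (fun p' => a (m + 1) (p' - 1) * (A p' * (C ^ p' - C ^ (-p'))))]
    have he : ∀ x : ℤ, a (m + 1) (x + 1 - 1) * (A (x + 1) * (C ^ (x + 1) - C ^ (-(x + 1))))
        = a (m + 1) x * (A (x + 1) * (C ^ (x + 1) - C ^ (-(x + 1)))) := by
      intro x
      rw [show x + 1 - 1 = x from by ring]
    rw [Finset.sum_congr rfl (fun x _ => he x)]
    refine (Finset.sum_subset (Finset.Icc_subset_Icc_left (by omega)) ?_).symm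
    intro x hx hnx
    simp only [Finset.mem_Icc] at hx hnx
    have hx0 : x = 0 := by omega
    rw [hx0, a_zero, zero_mul]
  rw [hA]
  -- shift the C-sum
  have hCsum : ∑ p' ∈ Finset.Icc (1 : ℤ) ((m : ℤ) + 1 + 1), a (m + 1) (p' + 1) * (A (-p') * (C ^ p' - C ^ (-p')))
      = ∑ x ∈ Finset.Icc (1 : ℤ) ((m : ℤ) + 1), a (m + 1) x * (A (1 - x) * (C ^ (x - 1) - C ^ (-(x - 1)))) := by
    have h1 : ∑ x ∈ Finset.Icc (1 + 1 : ℤ) (((m : ℤ) + 1 + 1) + 1),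
        a (m + 1) x * (A (1 - x) * (C ^ (x - 1) - C ^ (-(x - 1))))
        = ∑ p' ∈ Finset.Icc (1 : ℤ) ((m : ℤ) + 1 + 1), a (m + 1) (p' + 1) * (A (-p') * (C ^ p' - C ^ (-p'))) := by
      rw [shiftg' 1 ((m : ℤ) + 1 + 1) (1 + 1) ((m : ℤ) + 1 + 1 + 1) rfl rfl
        (fun x => a (m + 1) x * (A (1 - x) * (C ^ (x - 1) - C ^ (-(x - 1)))))]
      refine Finset.sum_congr rfl (fun x _ => ?_)
      rw [show 1 - (x + 1) = -x from by ring, show x + 1 - 1 = x from by ring]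
    rw [← h1]
    have h2 : ∑ x ∈ Finset.Icc (1 + 1 : ℤ) (((m : ℤ) + 1 + 1) + 1),
        a (m + 1) x * (A (1 - x) * (C ^ (x - 1) - C ^ (-(x - 1))))
        = ∑ x ∈ Finset.Icc (1 : ℤ) (((m : ℤ) + 1 + 1) + 1),
          a (m + 1) x * (A (1 - x) * (C ^ (x - 1) - C ^ (-(x - 1)))) := by
      refine Finset.sum_subset (Finset.Icc_subset_Icc_left (by omega)) ?_
      intro x hx hnx
      simp only [Finset.mem_Icc] at hx hnx
      have hx1 : x = 1 := by omega
      rw [hx1]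
      norm_num
    have h3 : ∑ x ∈ Finset.Icc (1 : ℤ) ((m : ℤ) + 1),
        a (m + 1) x * (A (1 - x) * (C ^ (x - 1) - C ^ (-(x - 1))))
        = ∑ x ∈ Finset.Icc (1 : ℤ) (((m : ℤ) + 1 + 1) + 1),
          a (m + 1) x * (A (1 - x) * (C ^ (x - 1) - C ^ (-(x - 1)))) := by
      refine Finset.sum_subset (Finset.Icc_subset_Icc_right (by omega)) ?_
      intro x hx hnx
      simp only [Finset.mem_Icc] at hx hnx
      rw [a_gt (m + 1) x (by push_cast; omega), zero_mul]
    rw [h2, ← h3]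
  rw [hCsum]
  -- shrink the B-sum
  have hB : ∑ p' ∈ Finset.Icc (1 : ℤ) ((m : ℤ) + 1 + 1),
      a (m + 1) p' * ((A p' - A (p' + 1)) * (C ^ p' - C ^ (-p')))
      = ∑ p' ∈ Finset.Icc (1 : ℤ) ((m : ℤ) + 1),
        a (m + 1) p' * ((A p' - A (p' + 1)) * (C ^ p' - C ^ (-p'))) := by
    refine (Finset.sum_subset (Finset.Icc_subset_Icc_right (by omega)) ?_).symm
    intro x hx hnx
    simp only [Finset.mem_Icc] at hx hnx
    rw [a_gt (m + 1) x (by push_cast; omega), zero_mul]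
  rw [hB]
  have hcancel : ∀ x y z w : F, x + y + z - w + w = x + y + z := by
    intro x y z w; ring
  rw [hcancel]
  simp only [← Finset.sum_add_distrib]
  refine Finset.sum_congr rfl (fun p' _ => ?_)
  ring

theorem evaluated_recurrence_system (n N : ℕ) (hn : 1 ≤ n) (hN : 1 ≤ N) :
    fev (n + 1) (-(q ^ (2 * (N : ℤ)))) + fev (n - 1) (-(q ^ (2 * (N : ℤ)))) =
      -(t1 * q ^ (-(2 * (N : ℤ))) + t1⁻¹ * q ^ (2 * (N : ℤ))) * fev n (-(q ^ (2 * (N : ℤ))))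
      + (t1 - t1⁻¹) * ∑ p ∈ Finset.Icc 1 (N - 1),
          br (2 * (p : ℤ)) * fev n (-(q ^ (2 * (2 * (p : ℤ) - (N : ℤ)))))
      - (t2 - t2⁻¹) * ∑ p ∈ Finset.range N,
          br (2 * (p : ℤ) + 1) * fev n (-(q ^ (2 * (2 * (p : ℤ) - (N : ℤ) + 1)))) := by
  obtain ⟨m, rfl⟩ : ∃ m, n = m + 1 := ⟨n - 1, by omega⟩
  simp only [Nat.add_sub_cancel]
  rw [step1 m N, Finset.sum_congr rfl (fun p' _ => by rw [key_lemma p' N hN])]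
  have r0 : -(t1 * q ^ (-(2 * (N : ℤ))) + t1⁻¹ * q ^ (2 * (N : ℤ))) * fev (m + 1) (-(q ^ (2 * (N : ℤ))))
      = ∑ p' ∈ Finset.Icc (1 : ℤ) ((m : ℤ) + 1),
          -(t1 * q ^ (-(2 * (N : ℤ))) + t1⁻¹ * q ^ (2 * (N : ℤ))) *
            (a (m + 1) p' * ((-(q ^ (2 * (N : ℤ)))) ^ p' - (-(q ^ (2 * (N : ℤ)))) ^ (-p'))) := by
    rw [fev, Finset.mul_sum]
    norm_cast
  have r1 : ∑ j ∈ Finset.Icc 1 (N - 1), br (2 * (j : ℤ)) * fev (m + 1) (-(q ^ (2 * (2 * (j : ℤ) - (N : ℤ)))))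
      = ∑ p' ∈ Finset.Icc (1 : ℤ) ((m : ℤ) + 1), ∑ j ∈ Finset.Icc 1 (N - 1),
          br (2 * (j : ℤ)) * (a (m + 1) p' *
            ((-(q ^ (2 * (2 * (j : ℤ) - (N : ℤ))))) ^ p' - (-(q ^ (2 * (2 * (j : ℤ) - (N : ℤ))))) ^ (-p'))) := by
    rw [Finset.sum_congr rfl (fun j _ => by rw [fev, Finset.mul_sum])]
    rw [show ((m + 1 : ℕ) : ℤ) = (m : ℤ) + 1 from by push_cast; ring]
    exact Finset.sum_comm
  have r2 : ∑ j ∈ Finset.range N, br (2 * (j : ℤ) + 1) * fev (m + 1) (-(q ^ (2 * (2 * (j : ℤ) - (N : ℤ) + 1))))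
      = ∑ p' ∈ Finset.Icc (1 : ℤ) ((m : ℤ) + 1), ∑ j ∈ Finset.range N,
          br (2 * (j : ℤ) + 1) * (a (m + 1) p' *
            ((-(q ^ (2 * (2 * (j : ℤ) - (N : ℤ) + 1)))) ^ p'
              - (-(q ^ (2 * (2 * (j : ℤ) - (N : ℤ) + 1)))) ^ (-p'))) := by
    rw [Finset.sum_congr rfl (fun j _ => by rw [fev, Finset.mul_sum])]
    rw [show ((m + 1 : ℕ) : ℤ) = (m : ℤ) + 1 from by push_cast; ring]
    exact Finset.sum_comm
  rw [r0, r1, r2]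
  have c1 : (t1 - t1⁻¹) * ∑ p' ∈ Finset.Icc (1 : ℤ) ((m : ℤ) + 1), ∑ j ∈ Finset.Icc 1 (N - 1),
        br (2 * (j : ℤ)) * (a (m + 1) p' *
          ((-(q ^ (2 * (2 * (j : ℤ) - (N : ℤ))))) ^ p' - (-(q ^ (2 * (2 * (j : ℤ) - (N : ℤ))))) ^ (-p')))
      = ∑ p' ∈ Finset.Icc (1 : ℤ) ((m : ℤ) + 1), (t1 - t1⁻¹) * ∑ j ∈ Finset.Icc 1 (N - 1),
        br (2 * (j : ℤ)) * (a (m + 1) p' *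
          ((-(q ^ (2 * (2 * (j : ℤ) - (N : ℤ))))) ^ p' - (-(q ^ (2 * (2 * (j : ℤ) - (N : ℤ))))) ^ (-p'))) := by
    rw [Finset.mul_sum]
  have c2 : (t2 - t2⁻¹) * ∑ p' ∈ Finset.Icc (1 : ℤ) ((m : ℤ) + 1), ∑ j ∈ Finset.range N,
        br (2 * (j : ℤ) + 1) * (a (m + 1) p' *
          ((-(q ^ (2 * (2 * (j : ℤ) - (N : ℤ) + 1)))) ^ p'
            - (-(q ^ (2 * (2 * (j : ℤ) - (N : ℤ) + 1)))) ^ (-p')))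
      = ∑ p' ∈ Finset.Icc (1 : ℤ) ((m : ℤ) + 1), (t2 - t2⁻¹) * ∑ j ∈ Finset.range N,
        br (2 * (j : ℤ) + 1) * (a (m + 1) p' *
          ((-(q ^ (2 * (2 * (j : ℤ) - (N : ℤ) + 1)))) ^ p'
            - (-(q ^ (2 * (2 * (j : ℤ) - (N : ℤ) + 1)))) ^ (-p'))) := by
    rw [Finset.mul_sum]
  rw [c1, c2, ← Finset.sum_add_distrib, ← Finset.sum_sub_distrib]
  refine Finset.sum_congr rfl (fun p' _ => ?_)
  have hy : ∑ j ∈ Finset.Icc 1 (N - 1), br (2 * (j : ℤ)) * (a (m + 1) p' *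
        ((-(q ^ (2 * (2 * (j : ℤ) - (N : ℤ))))) ^ p' - (-(q ^ (2 * (2 * (j : ℤ) - (N : ℤ))))) ^ (-p')))
      = a (m + 1) p' * ∑ j ∈ Finset.Icc 1 (N - 1), br (2 * (j : ℤ)) *
        ((-(q ^ (2 * (2 * (j : ℤ) - (N : ℤ))))) ^ p' - (-(q ^ (2 * (2 * (j : ℤ) - (N : ℤ))))) ^ (-p')) := by
    rw [Finset.mul_sum]
    exact Finset.sum_congr rfl (fun j _ => by ring)
  have hz : ∑ j ∈ Finset.range N, br (2 * (j : ℤ) + 1) * (a (m + 1) p' *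
        ((-(q ^ (2 * (2 * (j : ℤ) - (N : ℤ) + 1)))) ^ p'
          - (-(q ^ (2 * (2 * (j : ℤ) - (N : ℤ) + 1)))) ^ (-p')))
      = a (m + 1) p' * ∑ j ∈ Finset.range N, br (2 * (j : ℤ) + 1) *
        ((-(q ^ (2 * (2 * (j : ℤ) - (N : ℤ) + 1)))) ^ p'
          - (-(q ^ (2 * (2 * (j : ℤ) - (N : ℤ) + 1)))) ^ (-p')) := by
    rw [Finset.mul_sum]
    exact Finset.sum_congr rfl (fun j _ => by ring)
  rw [hy, hz]
  ring

end
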